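/- For connected graphs G and H, γ_coe(G ⋆ H) ≥ |O_V(G)|·|E_V(H)| + |E_V(G)|·|O_V(H)|, where G ⋆ H is the neighbourhood corona, O_V denotes the set of odd-degree vertices and E_V the set of even-degree vertices. -/
import Mathlib


open SimpleGraph

/-- `D` is a dominating set of `G`. -/
def IsDomSet {V : Type*} (G : SimpleGraph V) (D : Set V) : Prop :=
  ∀ v ∉ D, ∃ u ∈ D, G.Adj u v

/-- `D` is a co-even dominating set of `G`: a dominating set such that
every vertex outside `D` has even degree. -/
def IsCoEvenDomSet {V : Type*} (G : SimpleGraph V) (D : Set V) : Prop :=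
  IsDomSet G D ∧ ∀ v ∉ D, Even (G.neighborSet v).ncard

/-- The domination number. -/
noncomputable def gammaD {V : Type*} (G : SimpleGraph V) : ℕ :=
  sInf {n | ∃ D : Set V, IsDomSet G D ∧ D.ncard = n}

/-- The co-even domination number. -/
noncomputable def gammaCoe {V : Type*} (G : SimpleGraph V) : ℕ :=
  sInf {n | ∃ D : Set V, IsCoEvenDomSet G D ∧ D.ncard = n}

/-- The set of vertices of odd degree. -/
def oddVerts {V : Type*} (G : SimpleGraph V) : Set V :=
  {v | Odd (G.neighborSet v).ncard}

/-- The set of vertices of even degree. -/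
def evenVerts {V : Type*} (G : SimpleGraph V) : Set V :=
  {v | Even (G.neighborSet v).ncard}

/-- The join `G + H` of two graphs. -/
def joinG {V W : Type*} (G : SimpleGraph V) (H : SimpleGraph W) : SimpleGraph (V ⊕ W) :=
  SimpleGraph.fromRel (fun a b =>
    match a, b with
    | Sum.inl u, Sum.inl v => G.Adj u v
    | Sum.inr u, Sum.inr v => H.Adj u v
    | _, _ => True)

/-- The corona `G ∘ H`: one copy of `G` and `|V(G)|` copies of `H`,
joining the `i`-th vertex of `G` to every vertex of the `i`-th copy of `H`. -/
def corona {V W : Type*} (G : SimpleGraph V) (H : SimpleGraph W) : SimpleGraph (V ⊕ V × W) :=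
  SimpleGraph.fromRel (fun a b =>
    match a, b with
    | Sum.inl u, Sum.inl v => G.Adj u v
    | Sum.inr u, Sum.inr v => u.1 = v.1 ∧ H.Adj u.2 v.2
    | Sum.inl u, Sum.inr v => u = v.1
    | Sum.inr _, Sum.inl _ => False)

/-- The neighbourhood corona `G ⋆ H`: one copy of `G` and `|V(G)|` copies of `H`,
joining every neighbour of the `i`-th vertex of `G` to every vertex of the
`i`-th copy of `H`. -/
def ncorona {V W : Type*} (G : SimpleGraph V) (H : SimpleGraph W) : SimpleGraph (V ⊕ V × W) :=
  SimpleGraph.fromRel (fun a b =>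
    match a, b with
    | Sum.inl u, Sum.inl v => G.Adj u v
    | Sum.inr u, Sum.inr v => u.1 = v.1 ∧ H.Adj u.2 v.2
    | Sum.inl u, Sum.inr v => G.Adj u v.1
    | Sum.inr _, Sum.inl _ => False)

/-- The Hajós sum `G₁(x₁y₁) +_H G₂(x₂y₂)`: delete edges `x₁y₁` and `x₂y₂`,
identify `x₁` with `x₂` (represented here by `Sum.inr x₂`), and add the edge `y₁y₂`. -/
def hajos {V₁ V₂ : Type*} (G₁ : SimpleGraph V₁) (G₂ : SimpleGraph V₂)
    (x₁ y₁ : V₁) (x₂ y₂ : V₂) : SimpleGraph ({v : V₁ // v ≠ x₁} ⊕ V₂) :=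
  SimpleGraph.fromRel (fun a b =>
    match a, b with
    | Sum.inl u, Sum.inl v => G₁.Adj u.1 v.1
    | Sum.inr u, Sum.inr v => G₂.Adj u v ∧ ¬(u = x₂ ∧ v = y₂) ∧ ¬(u = y₂ ∧ v = x₂)
    | Sum.inl u, Sum.inr v => (v = x₂ ∧ G₁.Adj x₁ u.1 ∧ u.1 ≠ y₁) ∨ (u.1 = y₁ ∧ v = y₂)
    | Sum.inr _, Sum.inl _ => False)


lemma ncorona_adj_inr {V W : Type*} (G : SimpleGraph V) (H : SimpleGraph W)
    (v : V) (w : W) (x : V ⊕ V × W) :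
    (ncorona G H).Adj (Sum.inr (v, w)) x ↔
      (∃ u, x = Sum.inl u ∧ G.Adj u v) ∨
      (∃ w', x = Sum.inr (v, w') ∧ H.Adj w w') := by
  cases x with
  | inl u =>
    simp only [ncorona, SimpleGraph.fromRel_adj]
    constructor
    · rintro ⟨-, h | h⟩
      · exact absurd h not_false
      · exact Or.inl ⟨u, rfl, h⟩
    · rintro (⟨u', hu', h⟩ | ⟨w', hw', -⟩)
      · cases hu'; exact ⟨by simp, Or.inr h⟩
      · exact absurd hw' (by simp)
  | inr p =>
    obtain ⟨v', w'⟩ := p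
    simp only [ncorona, SimpleGraph.fromRel_adj]
    constructor
    · rintro ⟨hne, ⟨rfl, h⟩ | ⟨h1, h⟩⟩
      · exact Or.inr ⟨w', rfl, h⟩
      · subst h1; exact Or.inr ⟨w', rfl, h.symm⟩
    · rintro (⟨u, hu, -⟩ | ⟨w'', hw, h⟩)
      · exact absurd hu (by simp)
      · obtain ⟨rfl, rfl⟩ : v' = v ∧ w' = w'' := by
          simpa [Prod.ext_iff] using hw
        exact ⟨by simp [h.ne], Or.inl ⟨rfl, h⟩⟩

lemma ncorona_nbr {V W : Type*} (G : SimpleGraph V) (H : SimpleGraph W) (v : V) (w : W) :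
    (ncorona G H).neighborSet (Sum.inr (v, w)) =
      Sum.inl '' (G.neighborSet v) ∪
        Sum.inr '' ((fun w' => (v, w')) '' H.neighborSet w) := by
  ext x
  simp only [SimpleGraph.mem_neighborSet, ncorona_adj_inr, Set.mem_union, Set.mem_image]
  constructor
  · rintro (⟨u, rfl, h⟩ | ⟨w', rfl, h⟩)
    · exact Or.inl ⟨u, h.symm, rfl⟩
    · exact Or.inr ⟨(v, w'), ⟨w', h, rfl⟩, rfl⟩
  · rintro (⟨u, h, rfl⟩ | ⟨p, ⟨w', h, rfl⟩, rfl⟩)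
    · exact Or.inl ⟨u, rfl, h.symm⟩
    · exact Or.inr ⟨w', rfl, h⟩

lemma ncorona_deg {V W : Type*} [Fintype V] [Fintype W]
    (G : SimpleGraph V) (H : SimpleGraph W) (v : V) (w : W) :
    ((ncorona G H).neighborSet (Sum.inr (v, w))).ncard =
      (G.neighborSet v).ncard + (H.neighborSet w).ncard := by
  rw [ncorona_nbr, Set.ncard_union_eq]
  · rw [Set.ncard_image_of_injective _ Sum.inl_injective,
      Set.ncard_image_of_injective _ Sum.inr_injective,
      Set.ncard_image_of_injective _ (fun a b h => (Prod.mk.injEq _ _ _ _ ▸ h).2)]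
  · rw [Set.disjoint_iff]
    rintro x ⟨⟨u, -, rfl⟩, ⟨p, -, h⟩⟩
    simp at h

theorem stmt14 {V W : Type*} [Fintype V] [Fintype W]
    (G : SimpleGraph V) (H : SimpleGraph W)
    (hG : G.Connected) (hH : H.Connected) :
    (oddVerts G).ncard * (evenVerts H).ncard +
      (evenVerts G).ncard * (oddVerts H).ncard ≤ gammaCoe (ncorona G H) := by
  -- auxiliary set of forced vertices
  set S : Set (V ⊕ V × W) :=
    Sum.inr '' ((oddVerts G ×ˢ evenVerts H) ∪ (evenVerts G ×ˢ oddVerts H)) with hS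
  have hScard : S.ncard = (oddVerts G).ncard * (evenVerts H).ncard +
      (evenVerts G).ncard * (oddVerts H).ncard := by
    rw [hS, Set.ncard_image_of_injective _ Sum.inr_injective, Set.ncard_union_eq]
    · congr 1 <;>
      · rw [← Nat.card_coe_set_eq, Nat.card_congr (Equiv.Set.prod _ _), Nat.card_prod,
          Nat.card_coe_set_eq, Nat.card_coe_set_eq]
    · rw [Set.disjoint_iff]
      rintro ⟨a, b⟩ ⟨⟨ha, hb⟩, ⟨ha', hb'⟩⟩
      exact (Nat.not_odd_iff_even.mpr hb) hb'
  have key : ∀ D : Set (V ⊕ V × W), IsCoEvenDomSet (ncorona G H) D →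
      (oddVerts G).ncard * (evenVerts H).ncard +
        (evenVerts G).ncard * (oddVerts H).ncard ≤ D.ncard := by
    intro D hD
    rw [← hScard]
    apply Set.ncard_le_ncard _ (Set.toFinite D)
    rintro x hx
    by_contra hxD
    have hodd : Odd ((ncorona G H).neighborSet x).ncard := by
      obtain ⟨⟨v, w⟩, hvw, rfl⟩ := hx
      rw [ncorona_deg]
      rcases hvw with ⟨hv, hw⟩ | ⟨hv, hw⟩
      · exact hv.add_even hw
      · exact hv.add_odd hw
    exact (Nat.not_odd_iff_even.mpr (hD.2 x hxD)) hodd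
  have hne : {n | ∃ D : Set (V ⊕ V × W), IsCoEvenDomSet (ncorona G H) D ∧ D.ncard = n}.Nonempty := by
    exact ⟨(Set.univ : Set (V ⊕ V × W)).ncard, Set.univ,
      ⟨fun v hv => absurd (Set.mem_univ v) hv, fun v hv => absurd (Set.mem_univ v) hv⟩, rfl⟩
  obtain ⟨D, hD, hDcard⟩ := Nat.sInf_mem hne
  rw [gammaCoe, ← hDcard]
  exact key D hD
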